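/- Let C ⊆ F_q^n be a linear code whose dual C^⊥ has minimum Hamming weight at least 4. Then the three groups AutL_p(C), AutM(φ(C)) and AutM(φ(C)^⊥) are pairwise isomorphic, where φ(C) ⊆ F_p^{n₀n} is the concatenated code and φ(C)^⊥ its dual. -/

import Mathlib

open Finset

/-- The dual of a code (as a set of words) with respect to the standard inner product. -/
def dualSet {F : Type*} [CommRing F] {ι : Type*} [Fintype ι] (C : Set (ι → F)) :
    Set (ι → F) :=
  {y | ∀ x ∈ C, ∑ i, x i * y i = 0}

/-- Monomial automorphisms of a code. -/
def autMSet {F : Type*} [MonoidWithZero F] {ι : Type*} (C : Set (ι → F)) :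
    Set (Equiv.Perm (ι → F)) :=
  {e | (∃ (π : Equiv.Perm ι) (c : ι → F), (∀ i, c i ≠ 0) ∧
        ∀ v i, e v i = c i * v (π⁻¹ i)) ∧ ⇑e '' C = C}

/-- `Fp`-linear automorphisms of a code over a field `Fq` which is an `Fp`-algebra. -/
def autLSet (Fp : Type*) {Fq : Type*} [Field Fp] [Field Fq] [Algebra Fp Fq] {ι : Type*}
    (C : Set (ι → Fq)) : Set (Equiv.Perm (ι → Fq)) :=
  {e | (∃ (π : Equiv.Perm ι) (σ : ι → Equiv.Perm Fq),
        (∀ i x y, σ i (x + y) = σ i x + σ i y) ∧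
        (∀ i (b : Fp) (x : Fq), σ i (algebraMap Fp Fq b * x) = algebraMap Fp Fq b * σ i x) ∧
        ∀ v i, e v i = σ i (v (π⁻¹ i))) ∧ ⇑e '' C = C}

/-- Two subsets of (possibly different) groups are isomorphic as groups:
there is a bijection between them preserving multiplication. -/
def MulBijOn {X Y : Type*} [Mul X] [Mul Y] (A : Set X) (B : Set Y) : Prop :=
  ∃ f : X → Y, Set.BijOn f A B ∧ ∀ a ∈ A, ∀ b ∈ A, f (a * b) = f a * f b

set_option maxHeartbeats 1000000 in
/-- composition of `MulBijOn`s -/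
theorem MulBijOn.trans {X Y Z : Type*} [Mul X] [Mul Y] [Mul Z] {A : Set X} {B : Set Y}
    {D : Set Z} (h1 : MulBijOn A B) (h2 : MulBijOn B D) : MulBijOn A D := by
  obtain ⟨f, hf, hfm⟩ := h1
  obtain ⟨g, hg, hgm⟩ := h2
  refine ⟨g ∘ f, hg.comp hf, fun a ha b hb => ?_⟩
  simp only [Function.comp_apply]
  rw [hfm a ha b hb, hgm (f a) (hf.mapsTo ha) (f b) (hf.mapsTo hb)]

set_option linter.unusedSectionVars false

theorem Equiv.Perm.apply_inv_self {α : Type*} (f : Equiv.Perm α) (x : α) : f (f⁻¹ x) = x :=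
  f.apply_symm_apply x

theorem Equiv.Perm.inv_apply_self {α : Type*} (f : Equiv.Perm α) (x : α) : f⁻¹ (f x) = x :=
  f.symm_apply_apply x

section Gen

open scoped Classical

variable {ι : Type*} [Fintype ι] [DecidableEq ι] {F : Type*} [Field F]

def dot (x y : ι → F) : F := ∑ i, x i * y i

lemma dot_comm (x y : ι → F) : dot x y = dot y x := by
  unfold dot; exact Finset.sum_congr rfl fun i _ => mul_comm _ _

lemma dot_single (i : ι) (y : ι → F) : dot (Pi.single i 1) y = y i := by
  unfold dot
  rw [Finset.sum_eq_single i]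
  · simp
  · intro j _ hj; simp [Pi.single_eq_of_ne hj]
  · intro h; exact absurd (Finset.mem_univ i) h

lemma eq_of_forall_dot_left {y y' : ι → F} (h : ∀ x, dot x y = dot x y') : y = y' := by
  funext i
  have := h (Pi.single i 1)
  rwa [dot_single, dot_single] at this

/-- Monomial permutations. -/
def IsMono {ι F : Type*} [MonoidWithZero F] (e : Equiv.Perm (ι → F)) : Prop :=
  ∃ (π : Equiv.Perm ι) (c : ι → F), (∀ i, c i ≠ 0) ∧ ∀ v i, e v i = c i * v (π⁻¹ i)

lemma isMono_mul {e₁ e₂ : Equiv.Perm (ι → F)} (h₁ : IsMono e₁) (h₂ : IsMono e₂) :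
    IsMono (e₁ * e₂) := by
  obtain ⟨π₁, c₁, hc₁, he₁⟩ := h₁
  obtain ⟨π₂, c₂, hc₂, he₂⟩ := h₂
  refine ⟨π₁ * π₂, fun i => c₁ i * c₂ (π₁⁻¹ i), fun i => mul_ne_zero (hc₁ i) (hc₂ _), ?_⟩
  intro v i
  have : (e₁ * e₂) v i = e₁ (e₂ v) i := rfl
  rw [this, he₁, he₂, mul_assoc]
  rfl

/-- A monomial permutation built from data. -/
def monoEquiv (π : Equiv.Perm ι) (c : ι → F) (hc : ∀ i, c i ≠ 0) : Equiv.Perm (ι → F) where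
  toFun v i := c i * v (π⁻¹ i)
  invFun v i := (c (π i))⁻¹ * v (π i)
  left_inv v := by
    funext i
    simp only [Equiv.Perm.apply_inv_self]
    rw [← mul_assoc, inv_mul_cancel₀ (hc (π i)), one_mul, Equiv.Perm.inv_apply_self]
  right_inv v := by
    funext i
    simp only [Equiv.Perm.apply_inv_self]
    rw [← mul_assoc, mul_inv_cancel₀ (hc i), one_mul]

lemma monoEquiv_apply (π : Equiv.Perm ι) (c : ι → F) (hc : ∀ i, c i ≠ 0) (v : ι → F) (i : ι) :
    monoEquiv π c hc v i = c i * v (π⁻¹ i) := rfl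

lemma monoEquiv_isMono (π : Equiv.Perm ι) (c : ι → F) (hc : ∀ i, c i ≠ 0) :
    IsMono (monoEquiv π c hc) := ⟨π, c, hc, fun _ _ => rfl⟩

/-- `N` is the inverse-transpose partner of `M`. -/
def Dpart (M N : Equiv.Perm (ι → F)) : Prop :=
  IsMono N ∧ ∀ x y, dot (M x) (N y) = dot x y

lemma dpart_unique_right {M N N' : Equiv.Perm (ι → F)}
    (h : ∀ x y, dot (M x) (N y) = dot x y) (h' : ∀ x y, dot (M x) (N' y) = dot x y) :
    N = N' := by
  apply Equiv.ext; intro y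
  apply eq_of_forall_dot_left
  intro x
  have := h (M.symm x) y
  have h2 := h' (M.symm x) y
  simp only [Equiv.apply_symm_apply] at this h2
  · rw [this, h2]

lemma dpart_unique_left {M M' N : Equiv.Perm (ι → F)}
    (h : ∀ x y, dot (M x) (N y) = dot x y) (h' : ∀ x y, dot (M' x) (N y) = dot x y) :
    M = M' := by
  apply Equiv.ext; intro x
  apply eq_of_forall_dot_left
  intro u
  have := h x (N.symm u)
  have h2 := h' x (N.symm u)
  simp only [Equiv.apply_symm_apply] at this h2
  rw [dot_comm u (M x), dot_comm u (M' x), this, h2]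

lemma dpart_explicit {M : Equiv.Perm (ι → F)} (π : Equiv.Perm ι) (c : ι → F)
    (hc : ∀ i, c i ≠ 0) (he : ∀ v i, M v i = c i * v (π⁻¹ i)) :
    Dpart M (monoEquiv π (fun i => (c i)⁻¹) (fun i => inv_ne_zero (hc i))) := by
  refine ⟨monoEquiv_isMono _ _ _, ?_⟩
  intro x y
  unfold dot
  rw [← Equiv.sum_comp π⁻¹ (fun i => x i * y i)]
  refine Finset.sum_congr rfl fun i _ => ?_
  rw [he, monoEquiv_apply]
  rw [mul_mul_mul_comm, mul_inv_cancel₀ (hc i), one_mul]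

lemma dpart_exists {M : Equiv.Perm (ι → F)} (h : IsMono M) : ∃ N, Dpart M N := by
  obtain ⟨π, c, hc, he⟩ := h
  exact ⟨_, dpart_explicit π c hc he⟩

lemma dpart_symm {M N : Equiv.Perm (ι → F)} (hM : IsMono M) (h : Dpart M N) : Dpart N M :=
  ⟨hM, fun x y => by rw [dot_comm, h.2, dot_comm]⟩

noncomputable def dualPartner (M : Equiv.Perm (ι → F)) : Equiv.Perm (ι → F) :=
  if h : ∃ N, Dpart M N then h.choose else 1

lemma dualPartner_spec {M : Equiv.Perm (ι → F)} (h : IsMono M) : Dpart M (dualPartner M) := by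
  rw [dualPartner, dif_pos (dpart_exists h)]
  exact (dpart_exists h).choose_spec

lemma dualPartner_eq {M N : Equiv.Perm (ι → F)} (h : Dpart M N) : dualPartner M = N := by
  have hex : ∃ N, Dpart M N := ⟨N, h⟩
  rw [dualPartner, dif_pos hex]
  exact dpart_unique_right hex.choose_spec.2 h.2

lemma dpart_memD {M N : Equiv.Perm (ι → F)} (h : Dpart M N) {V : Set (ι → F)}
    (hV : ⇑M '' V = V) : ⇑N '' dualSet V = dualSet V := by
  apply Set.Subset.antisymm
  · rintro _ ⟨y, hy, rfl⟩
    intro v hv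
    rw [← hV] at hv
    obtain ⟨u, hu, rfl⟩ := hv
    show ∑ i, M u i * N y i = 0
    calc ∑ i, M u i * N y i = dot (M u) (N y) := rfl
      _ = dot u y := h.2 u y
      _ = 0 := hy u hu
  · intro x hx
    refine ⟨N.symm x, ?_, Equiv.apply_symm_apply _ _⟩
    intro v hv
    have hv2 : M v ∈ V := by rw [← hV]; exact Set.mem_image_of_mem _ hv
    have := h.2 v (N.symm x)
    rw [Equiv.apply_symm_apply] at this
    show ∑ i, v i * N.symm x i = 0
    calc ∑ i, v i * N.symm x i = dot v (N.symm x) := rfl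
      _ = dot (M v) x := this.symm
      _ = 0 := hx _ hv2

/-- If a set equals its double dual, then `AutM`s of it and its dual are isomorphic. -/
theorem mulBijOn_autM_dual (V : Set (ι → F)) (hdd : dualSet (dualSet V) = V) :
    MulBijOn (autMSet V) (autMSet (dualSet V)) := by
  refine ⟨dualPartner, ⟨?_, ?_, ?_⟩, ?_⟩
  · -- MapsTo
    rintro M ⟨hm, hMV⟩
    have h := dualPartner_spec hm
    exact ⟨h.1, dpart_memD h hMV⟩
  · -- InjOn
    rintro M ⟨hm, _⟩ M' ⟨hm', _⟩ heq
    have h := dualPartner_spec hm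
    have h' := dualPartner_spec hm'
    rw [heq] at h
    exact dpart_unique_left h.2 h'.2
  · -- SurjOn
    rintro N ⟨hn, hND⟩
    have h := dualPartner_spec hn
    have hMN : Dpart (dualPartner N) N := dpart_symm hn h
    refine ⟨dualPartner N, ⟨h.1, ?_⟩, dualPartner_eq hMN⟩
    have := dpart_memD h hND
    rwa [hdd] at this
  · -- multiplicative
    rintro M₁ ⟨hm₁, _⟩ M₂ ⟨hm₂, _⟩
    have h₁ := dualPartner_spec hm₁
    have h₂ := dualPartner_spec hm₂
    refine dualPartner_eq ⟨isMono_mul h₁.1 h₂.1, ?_⟩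
    intro x y
    have : (M₁ * M₂) x = M₁ (M₂ x) := rfl
    rw [this]
    have : (dualPartner M₁ * dualPartner M₂) y = dualPartner M₁ (dualPartner M₂ y) := rfl
    rw [this, h₁.2, h₂.2]

end Gen

section DD
variable {ι : Type*} [Fintype ι] [DecidableEq ι] {F : Type*} [Field F]

lemma repr_fun (g : (ι → F) →ₗ[F] F) (v : ι → F) :
    g v = ∑ i, v i * g (Pi.single i 1) := by
  conv_lhs => rw [← Finset.univ_sum_single v]
  rw [map_sum]
  refine Finset.sum_congr rfl fun i _ => ?_
  have : Pi.single i (v i) = v i • (Pi.single i (1 : F) : ι → F) := by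
    funext j
    rcases eq_or_ne j i with rfl | hj
    · simp
    · simp [Pi.single_eq_of_ne hj]
  rw [this, map_smul, smul_eq_mul]

theorem dualSet_dualSet (W : Submodule F (ι → F)) :
    dualSet (dualSet (W : Set (ι → F))) = W := by
  apply Set.Subset.antisymm
  · intro x hx
    by_contra hxW
    set Q := (ι → F) ⧸ W
    have hmk : (Submodule.Quotient.mk x : Q) ≠ 0 := by
      simpa [Submodule.Quotient.mk_eq_zero] using hxW
    obtain ⟨φ, hφ⟩ : ∃ φ : Module.Dual F Q, φ (Submodule.Quotient.mk x) ≠ 0 := by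
      by_contra hall
      push_neg at hall
      exact hmk (((Module.forall_dual_apply_eq_zero_iff F _).mp hall))
    set g : (ι → F) →ₗ[F] F := φ.comp W.mkQ with hg
    have hgW : ∀ w ∈ W, g w = 0 := by
      intro w hw
      have : W.mkQ w = 0 := by
        rw [Submodule.mkQ_apply]
        exact (Submodule.Quotient.mk_eq_zero W).mpr hw
      simp [hg, this]
    have hz : (fun i => g (Pi.single i 1)) ∈ dualSet (W : Set (ι → F)) := by
      intro w hw
      rw [← repr_fun]
      exact hgW w hw
    have := hx _ hz
    rw [show (∑ i, (fun i => g (Pi.single i 1)) i * x i) = g x by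
      rw [repr_fun g x]; exact Finset.sum_congr rfl fun i _ => mul_comm _ _] at this
    exact hφ this
  · intro x hx z hz
    rw [show (∑ i, z i * x i) = ∑ i, x i * z i from
      Finset.sum_congr rfl fun i _ => mul_comm _ _]
    exact hz x hx
end DD

section Xi
variable {Fp Fq : Type} [Field Fp] [Field Fq] [Fintype Fp] [Fintype Fq]
  [DecidableEq Fp] [DecidableEq Fq] [Algebra Fp Fq]

/-- Bundled consequences of the hypotheses on `ξ`. -/
structure XiSetup (n₀ : ℕ) (ξ : Fq) : Prop where
  ord : orderOf ξ = n₀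
  pos : 0 < n₀
  dec : ∀ u : Fq, u ≠ 0 → ∃ (a : Fp) (l : Fin n₀), a ≠ 0 ∧
    u = algebraMap Fp Fq a * ξ ^ ((l : ℕ) + 1)
  uniq : ∀ (a a' : Fp) (l l' : Fin n₀), a ≠ 0 → a' ≠ 0 →
    algebraMap Fp Fq a * ξ ^ ((l : ℕ) + 1) = algebraMap Fp Fq a' * ξ ^ ((l' : ℕ) + 1) →
    a = a' ∧ l = l'

theorem xiSetup (p k n₀ : ℕ) (hk : 1 ≤ k) (hcop : Nat.Coprime k (p - 1))
    (hcp : Fintype.card Fp = p) (hcq : Fintype.card Fq = p ^ k)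
    (hn₀ : n₀ = (p ^ k - 1) / (p - 1)) (ξ : Fq) (hξ : orderOf ξ = n₀) :
    XiSetup (Fp := Fp) n₀ ξ := by
  have hp2 : 2 ≤ p := by
    rw [← hcp]; exact Fintype.one_lt_card
  have hpk : p ≤ p ^ k := by
    calc p = p ^ 1 := (pow_one p).symm
    _ ≤ p ^ k := Nat.pow_le_pow_right (by omega) hk
  have hdvd : p - 1 ∣ p ^ k - 1 := by
    have := Nat.sub_dvd_pow_sub_pow p 1 k
    simpa using this
  have hA : (p - 1) * n₀ = p ^ k - 1 := by
    rw [hn₀]; exact Nat.mul_div_cancel' hdvd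
  have hn₀pos : 0 < n₀ := by
    rcases Nat.eq_zero_or_pos n₀ with h | h
    · rw [h, Nat.mul_zero] at hA; omega
    · exact h
  -- geometric sum: n₀ = ∑ i in range k, p ^ i
  have hgeo : ∀ m : ℕ, (p - 1) * (∑ i ∈ Finset.range m, p ^ i) = p ^ m - 1 := by
    intro m
    induction m with
    | zero => simp
    | succ m ih =>
      rw [Finset.sum_range_succ, Nat.mul_add, ih]
      have h1 : 1 ≤ p ^ m := Nat.one_le_pow _ _ (by omega)
      have h2 : p ^ m ≤ p ^ (m + 1) := Nat.pow_le_pow_right (by omega) (by omega)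
      have h3 : (p - 1) * p ^ m = p ^ (m+1) - p ^ m := by
        rw [Nat.sub_mul, one_mul, pow_succ, Nat.mul_comm (p ^ m) p]
      omega
  have hsum : n₀ = ∑ i ∈ Finset.range k, p ^ i := by
    have := hgeo k
    rw [← hA] at this
    exact (Nat.eq_of_mul_eq_mul_left (by omega) this.symm)
  -- n₀ ≡ k [MOD p-1]
  have hmod : n₀ ≡ k [MOD p - 1] := by
    rw [hsum]
    have hone : (p : ℕ) ≡ 1 [MOD p - 1] := ((Nat.modEq_iff_dvd' (by omega)).mpr dvd_rfl).symm
    have hpow : ∀ i : ℕ, p ^ i % (p - 1) = 1 % (p - 1) := fun i => by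
      have := hone.pow i
      simpa [one_pow, Nat.ModEq] using this
    show (∑ i ∈ Finset.range k, p ^ i) % (p - 1) = k % (p - 1)
    calc (∑ i ∈ Finset.range k, p ^ i) % (p - 1)
        = (∑ i ∈ Finset.range k, (1 % (p - 1))) % (p - 1) := by
          rw [Finset.sum_nat_mod]
          congr 1
          exact Finset.sum_congr rfl fun i _ => hpow i
      _ = (∑ _i ∈ Finset.range k, 1) % (p - 1) := by
          rw [← Finset.sum_nat_mod]
      _ = k % (p - 1) := by simp
  -- coprimality of n₀ and p - 1
  have hcopn : Nat.Coprime n₀ (p - 1) := by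
    have h1 : Nat.gcd (p - 1) n₀ = Nat.gcd (p - 1) k := by
      rw [Nat.gcd_rec (p - 1) n₀, Nat.gcd_rec (p - 1) k, hmod]
    have h2 : Nat.gcd (p - 1) k = 1 := Nat.Coprime.gcd_eq_one (Nat.coprime_comm.mp hcop)
    exact Nat.coprime_comm.mp (h1.trans h2)
  have hxne : ξ ≠ 0 := by
    intro h
    have h1 : ξ ^ n₀ = 1 := by rw [← hξ]; exact pow_orderOf_eq_one ξ
    rw [h, zero_pow (by omega)] at h1
    exact zero_ne_one h1
  have hxpowne : ∀ m : ℕ, ξ ^ m ≠ 0 := fun m => pow_ne_zero m hxne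
  have hinj : Function.Injective (algebraMap Fp Fq) := (algebraMap Fp Fq).injective
  -- core subgroup intersection lemma
  have hcore : ∀ (a : Fp) (t : ℕ), a ≠ 0 → algebraMap Fp Fq a = ξ ^ t →
      algebraMap Fp Fq a = 1 := by
    intro a t ha heq
    have h1 : (algebraMap Fp Fq a) ^ (p - 1) = 1 := by
      rw [← map_pow, ← hcp, FiniteField.pow_card_sub_one_eq_one a ha, map_one]
    have h2 : (algebraMap Fp Fq a) ^ n₀ = 1 := by
      rw [heq, ← pow_mul, mul_comm, pow_mul, ← hξ, pow_orderOf_eq_one, one_pow]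
    have d1 : orderOf (algebraMap Fp Fq a) ∣ p - 1 := orderOf_dvd_of_pow_eq_one h1
    have d2 : orderOf (algebraMap Fp Fq a) ∣ n₀ := orderOf_dvd_of_pow_eq_one h2
    have : orderOf (algebraMap Fp Fq a) ∣ 1 := by
      have := Nat.dvd_gcd d2 d1
      rwa [Nat.Coprime.gcd_eq_one hcopn] at this
    rw [Nat.dvd_one] at this
    exact orderOf_eq_one_iff.mp this
  -- uniqueness
  have huniq : ∀ (a a' : Fp) (l l' : Fin n₀), a ≠ 0 → a' ≠ 0 →
      algebraMap Fp Fq a * ξ ^ ((l : ℕ) + 1) = algebraMap Fp Fq a' * ξ ^ ((l' : ℕ) + 1) →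
      a = a' ∧ l = l' := by
    intro a a' l l' ha ha' heq
    have haq : algebraMap Fp Fq a ≠ 0 := fun h => ha (hinj (by rw [h, map_zero]))
    have ha'q : algebraMap Fp Fq a' ≠ 0 := fun h => ha' (hinj (by rw [h, map_zero]))
    have hle : (l : ℕ) + 1 ≤ n₀ := l.2
    have hxn : ξ ^ ((l : ℕ) + 1) * ξ ^ (n₀ - ((l : ℕ) + 1)) = 1 := by
      rw [← pow_add, Nat.add_sub_cancel' hle, ← hξ, pow_orderOf_eq_one]
    have heq2 : algebraMap Fp Fq a
        = algebraMap Fp Fq a' * ξ ^ ((l' : ℕ) + 1 + (n₀ - ((l : ℕ) + 1))) := by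
      have := congrArg (· * ξ ^ (n₀ - ((l : ℕ) + 1))) heq
      calc algebraMap Fp Fq a
          = algebraMap Fp Fq a * (ξ ^ ((l : ℕ) + 1) * ξ ^ (n₀ - ((l : ℕ) + 1))) := by
            rw [hxn, mul_one]
        _ = algebraMap Fp Fq a * ξ ^ ((l : ℕ) + 1) * ξ ^ (n₀ - ((l : ℕ) + 1)) := by ring
        _ = algebraMap Fp Fq a' * ξ ^ ((l' : ℕ) + 1) * ξ ^ (n₀ - ((l : ℕ) + 1)) := this
        _ = algebraMap Fp Fq a' * ξ ^ ((l' : ℕ) + 1 + (n₀ - ((l : ℕ) + 1))) := by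
            rw [pow_add]; ring
    have hdiv : algebraMap Fp Fq (a * a'⁻¹) = ξ ^ ((l' : ℕ) + 1 + (n₀ - ((l : ℕ) + 1))) := by
      rw [map_mul, map_inv₀, heq2]
      field_simp
    have hone : algebraMap Fp Fq (a * a'⁻¹) = 1 :=
      hcore _ _ (mul_ne_zero ha (inv_ne_zero ha')) hdiv
    have haa : a = a' := by
      have : a * a'⁻¹ = 1 := hinj (by rw [hone, map_one])
      field_simp at this
      exact this
    refine ⟨haa, ?_⟩
    subst haa
    have hxx : ξ ^ ((l : ℕ) + 1) = ξ ^ ((l' : ℕ) + 1) := by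
      exact mul_left_cancel₀ haq heq
    have hxx2 : ξ ^ (l : ℕ) = ξ ^ (l' : ℕ) := by
      rw [pow_succ, pow_succ] at hxx
      exact mul_right_cancel₀ hxne hxx
    have key : ∀ (x y : Fin n₀), (x : ℕ) ≤ (y : ℕ) → ξ ^ (x : ℕ) = ξ ^ (y : ℕ) →
        (x : ℕ) = (y : ℕ) := by
      intro x y hxy hpow
      have : ξ ^ ((y : ℕ) - (x : ℕ)) = 1 := by
        have h2 : ξ ^ (x : ℕ) * ξ ^ ((y : ℕ) - (x : ℕ)) = ξ ^ (x : ℕ) * 1 := by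
          rw [← pow_add, Nat.add_sub_cancel' hxy, mul_one]; exact hpow.symm
        exact mul_left_cancel₀ (hxpowne _) h2
      have hd : n₀ ∣ (y : ℕ) - (x : ℕ) := by
        have h3 := orderOf_dvd_of_pow_eq_one this
        rwa [hξ] at h3
      have := Nat.eq_zero_of_dvd_of_lt hd
      omega
    rcases le_total (l : ℕ) (l' : ℕ) with h | h
    · exact Fin.ext (key l l' h hxx2)
    · exact Fin.ext (key l' l h hxx2.symm).symm
  -- existence via counting
  have hdec : ∀ u : Fq, u ≠ 0 → ∃ (a : Fp) (l : Fin n₀), a ≠ 0 ∧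
      u = algebraMap Fp Fq a * ξ ^ ((l : ℕ) + 1) := by
    intro u hu
    set f : {a : Fp // a ≠ 0} × Fin n₀ → {u : Fq // u ≠ 0} :=
      fun x => ⟨algebraMap Fp Fq x.1.1 * ξ ^ ((x.2 : ℕ) + 1),
        mul_ne_zero (fun h => x.1.2 (hinj (by rw [h, map_zero]))) (hxpowne _)⟩ with hf
    have hfinj : Function.Injective f := by
      rintro ⟨⟨a, ha⟩, l⟩ ⟨⟨a', ha'⟩, l'⟩ h
      have := congrArg Subtype.val h
      simp only [hf] at this
      obtain ⟨h1, h2⟩ := huniq a a' l l' ha ha' this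
      simp [h1, h2]
    have hcard : Fintype.card ({a : Fp // a ≠ 0} × Fin n₀) = Fintype.card {u : Fq // u ≠ 0} := by
      rw [Fintype.card_prod, Fintype.card_fin]
      have c1 : Fintype.card {a : Fp // a ≠ 0} = p - 1 := by
        rw [← hcp]
        simp [Fintype.card_subtype_compl]
      have c2 : Fintype.card {u : Fq // u ≠ 0} = p ^ k - 1 := by
        rw [← hcq]
        simp [Fintype.card_subtype_compl]
      rw [c1, c2, hA]
    have hfsurj : Function.Surjective f :=
      ((Fintype.bijective_iff_injective_and_card f).mpr ⟨hfinj, hcard⟩).2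
    obtain ⟨⟨⟨a, ha⟩, l⟩, hfa⟩ := hfsurj ⟨u, hu⟩
    exact ⟨a, l, ha, by
      have := congrArg Subtype.val hfa
      simp only [hf] at this
      exact this.symm⟩
  exact ⟨hξ, hn₀pos, hdec, huniq⟩


variable {n₀ : ℕ} {ξ : Fq}

lemma tr_smul (b : Fp) (x : Fq) :
    Algebra.trace Fp Fq (algebraMap Fp Fq b * x) = b * Algebra.trace Fp Fq x := by
  rw [← Algebra.smul_def, map_smul, smul_eq_mul]

lemma tr_nd {u : Fq} (h : ∀ z, Algebra.trace Fp Fq (z * u) = 0) : u = 0 := by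
  have hnd := traceForm_nondegenerate Fp Fq
  refine hnd.1 u fun z => ?_
  rw [Algebra.traceForm_apply, mul_comm]
  exact h z

lemma tr_ex {u : Fq} (h : u ≠ 0) : ∃ z, Algebra.trace Fp Fq (z * u) ≠ 0 := by
  by_contra hc
  push_neg at hc
  exact h (tr_nd hc)

lemma tr_rep (g : Fq →ₗ[Fp] Fp) : ∃ b : Fq, ∀ z, g z = Algebra.trace Fp Fq (z * b) := by
  have hnd := traceForm_nondegenerate Fp Fq
  set e := LinearMap.BilinForm.toDual (Algebra.traceForm Fp Fq) hnd with he
  refine ⟨e.symm g, fun z => ?_⟩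
  have : e (e.symm g) = g := e.apply_symm_apply g
  have h2 := congrFun (congrArg (fun (h : Module.Dual Fp Fq) => (h : Fq → Fp)) this) z
  rw [← h2]
  have h3 : (e (e.symm g)) z = Algebra.trace Fp Fq ((e.symm g) * z) := rfl
  rw [h3, mul_comm]

lemma trmul (b : Fp) (z u : Fq) :
    Algebra.trace Fp Fq ((algebraMap Fp Fq b * z) * u) = b * Algebra.trace Fp Fq (z * u) := by
  rw [mul_assoc, tr_smul]

namespace XiSetup

variable (S : XiSetup (Fp := Fp) n₀ ξ)
include S

lemma xine : ξ ≠ 0 := by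
  intro h
  have h1 : ξ ^ n₀ = 1 := by rw [← S.ord]; exact pow_orderOf_eq_one ξ
  rw [h, zero_pow S.pos.ne'] at h1
  exact zero_ne_one h1

lemma powne (m : ℕ) : ξ ^ m ≠ 0 := pow_ne_zero m S.xine

lemma indep {l l' : Fin n₀} (hll : l ≠ l') {a b : Fp}
    (h : algebraMap Fp Fq a * ξ ^ ((l : ℕ) + 1) + algebraMap Fp Fq b * ξ ^ ((l' : ℕ) + 1) = 0) :
    a = 0 ∧ b = 0 := by
  have hinj : Function.Injective (algebraMap Fp Fq) := (algebraMap Fp Fq).injective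
  by_cases ha : a = 0
  · subst ha
    simp only [map_zero, zero_mul, zero_add] at h
    rcases mul_eq_zero.mp h with h | h
    · exact ⟨rfl, hinj (by rw [h, map_zero])⟩
    · exact absurd h (S.powne _)
  · by_cases hb : b = 0
    · subst hb
      simp only [map_zero, zero_mul, add_zero] at h
      rcases mul_eq_zero.mp h with h | h
      · exact absurd (hinj (by rw [h, map_zero])) ha
      · exact absurd h (S.powne _)
    · exfalso
      have heq : algebraMap Fp Fq a * ξ ^ ((l : ℕ) + 1)
          = algebraMap Fp Fq (-b) * ξ ^ ((l' : ℕ) + 1) := by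
        rw [map_neg]; linear_combination h
      exact hll (S.uniq a (-b) l l' ha (neg_ne_zero.mpr hb) heq).2

lemma sep {l l' : Fin n₀} (hll : l ≠ l') :
    ∃ z, Algebra.trace Fp Fq (z * ξ ^ ((l' : ℕ) + 1)) = 0 ∧
      Algebra.trace Fp Fq (z * ξ ^ ((l : ℕ) + 1)) ≠ 0 := by
  by_contra hc
  push_neg at hc
  obtain ⟨z₀, hz₀⟩ := tr_ex (Fp := Fp) (S.powne ((l' : ℕ) + 1))
  set t₁ := Algebra.trace Fp Fq (z₀ * ξ ^ ((l' : ℕ) + 1)) with ht₁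
  set t₂ := Algebra.trace Fp Fq (z₀ * ξ ^ ((l : ℕ) + 1)) with ht₂
  have key : ∀ z : Fq, t₁ * Algebra.trace Fp Fq (z * ξ ^ ((l : ℕ) + 1))
      = Algebra.trace Fp Fq (z * ξ ^ ((l' : ℕ) + 1)) * t₂ := by
    intro z
    set w := algebraMap Fp Fq t₁ * z
      - algebraMap Fp Fq (Algebra.trace Fp Fq (z * ξ ^ ((l' : ℕ) + 1))) * z₀ with hw
    have hw' : Algebra.trace Fp Fq (w * ξ ^ ((l' : ℕ) + 1)) = 0 := by
      rw [hw, sub_mul, map_sub, trmul, trmul, ← ht₁]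
      ring
    have := hc w hw'
    rw [hw, sub_mul, map_sub, trmul, trmul, sub_eq_zero] at this
    rw [this, ← ht₂]
  have hz : ∀ z : Fq, Algebra.trace Fp Fq
      (z * (algebraMap Fp Fq t₁ * ξ ^ ((l : ℕ) + 1)
        - algebraMap Fp Fq t₂ * ξ ^ ((l' : ℕ) + 1))) = 0 := by
    intro z
    rw [mul_sub, map_sub]
    rw [show z * (algebraMap Fp Fq t₁ * ξ ^ ((l : ℕ) + 1))
        = algebraMap Fp Fq t₁ * (z * ξ ^ ((l : ℕ) + 1)) by ring]
    rw [show z * (algebraMap Fp Fq t₂ * ξ ^ ((l' : ℕ) + 1))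
        = algebraMap Fp Fq t₂ * (z * ξ ^ ((l' : ℕ) + 1)) by ring]
    rw [tr_smul t₁, tr_smul t₂]
    rw [sub_eq_zero]
    rw [key z]
    ring
  have h0 := tr_nd hz
  rw [sub_eq_zero] at h0
  have := S.indep hll (a := t₁) (b := -t₂) (by rw [map_neg]; linear_combination h0)
  exact hz₀ this.1

lemma inj0 {z : Fq} (h : ∀ l : Fin n₀, Algebra.trace Fp Fq (z * ξ ^ ((l : ℕ) + 1)) = 0) :
    z = 0 := by
  apply tr_nd (Fp := Fp) (u := z)
  intro w
  rw [mul_comm]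
  by_cases hw : w = 0
  · simp [hw]
  · obtain ⟨a, l, ha, rfl⟩ := S.dec w hw
    rw [show z * (algebraMap Fp Fq a * ξ ^ ((l : ℕ) + 1))
        = algebraMap Fp Fq a * (z * ξ ^ ((l : ℕ) + 1)) by ring, tr_smul a, h l, mul_zero]
  
lemma ham3 {l l' : Fin n₀} (hll : l ≠ l') :
    ∃ (y : Fin n₀ → Fp) (l'' : Fin n₀), y l ≠ 0 ∧ y l' ≠ 0 ∧ l'' ≠ l ∧ l'' ≠ l' ∧
      (∀ m, y m ≠ 0 → m = l ∨ m = l' ∨ m = l'') ∧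
      ∑ m : Fin n₀, algebraMap Fp Fq (y m) * ξ ^ ((m : ℕ) + 1) = 0 := by
  have hinj : Function.Injective (algebraMap Fp Fq) := (algebraMap Fp Fq).injective
  set t := ξ ^ ((l : ℕ) + 1) + ξ ^ ((l' : ℕ) + 1) with ht
  have htne : t ≠ 0 := by
    intro h0
    have := S.indep hll (a := (1:Fp)) (b := (1:Fp)) (by rw [map_one, one_mul, one_mul]; exact h0)
    exact one_ne_zero this.1
  obtain ⟨a, l'', ha, hdec⟩ := S.dec t htne
  have hl''l : l'' ≠ l := by
    rintro rfl
    have : algebraMap Fp Fq (1 - a) * ξ ^ ((l'' : ℕ) + 1)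
        + algebraMap Fp Fq 1 * ξ ^ ((l' : ℕ) + 1) = 0 := by
      rw [map_sub, map_one]
      linear_combination hdec
    have := S.indep hll this
    simp at this
  have hl''l' : l'' ≠ l' := by
    rintro rfl
    have : algebraMap Fp Fq 1 * ξ ^ ((l : ℕ) + 1)
        + algebraMap Fp Fq (1 - a) * ξ ^ ((l'' : ℕ) + 1) = 0 := by
      rw [map_sub, map_one]
      linear_combination hdec
    have := S.indep hll this
    simp at this
  classical
  refine ⟨fun m => (if m = l then 1 else 0) + (if m = l' then 1 else 0)
    + (if m = l'' then -a else 0), l'', ?_, ?_, hl''l, hl''l', ?_, ?_⟩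
  · simp [hll, hl''l.symm]
  · simp [hll.symm, hl''l'.symm]
  · intro m hm
    by_contra hcon
    push_neg at hcon
    simp [hcon.1, hcon.2.1, hcon.2.2] at hm
  · have hsplit : ∀ m : Fin n₀,
        algebraMap Fp Fq ((if m = l then (1:Fp) else 0) + (if m = l' then 1 else 0)
          + (if m = l'' then -a else 0)) * ξ ^ ((m : ℕ) + 1)
        = (if m = l then ξ ^ ((l : ℕ) + 1) else 0)
          + (if m = l' then ξ ^ ((l' : ℕ) + 1) else 0)
          + (if m = l'' then algebraMap Fp Fq (-a) * ξ ^ ((l'' : ℕ) + 1) else 0) := by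
      intro m
      rcases eq_or_ne m l with rfl | h1 <;> rcases eq_or_ne m l' with rfl | h2 <;>
        rcases eq_or_ne m l'' with rfl | h3 <;>
        simp_all <;> ring
    rw [Finset.sum_congr rfl fun m _ => hsplit m]
    rw [Finset.sum_add_distrib, Finset.sum_add_distrib]
    rw [Finset.sum_ite_eq' Finset.univ l, Finset.sum_ite_eq' Finset.univ l',
      Finset.sum_ite_eq' Finset.univ l'']
    simp only [Finset.mem_univ, if_true]
    rw [map_neg]
    linear_combination hdec

lemma rel2 {m₁ m₂ : Fin n₀} (hne : m₁ ≠ m₂) (y : Fin n₀ → Fp)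
    (hsupp : ∀ mm, y mm ≠ 0 → mm = m₁ ∨ mm = m₂)
    (hrel : ∑ mm, algebraMap Fp Fq (y mm) * ξ ^ ((mm : ℕ) + 1) = 0) : y m₁ = 0 := by
  classical
  have hsub : ({m₁, m₂} : Finset (Fin n₀)) ⊆ Finset.univ := Finset.subset_univ _
  have hz : ∀ mm ∈ Finset.univ, mm ∉ ({m₁, m₂} : Finset (Fin n₀)) →
      algebraMap Fp Fq (y mm) * ξ ^ ((mm : ℕ) + 1) = 0 := by
    intro mm _ hmm
    simp only [Finset.mem_insert, Finset.mem_singleton, not_or] at hmm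
    have : y mm = 0 := by
      by_contra hy
      rcases hsupp mm hy with h | h
      · exact hmm.1 h
      · exact hmm.2 h
    rw [this, map_zero, zero_mul]
  have := (Finset.sum_subset hsub hz).symm
  rw [hrel] at this
  rw [Finset.sum_pair hne] at this
  exact (S.indep hne this.symm).1

/-- Every `Fp`-linear bijection of `Fq` induces a monomial transformation of the trace
coordinates. -/
lemma mono_of_linear (τ : Fq → Fq) (hbij : Function.Bijective τ)
    (hadd : ∀ x y, τ (x + y) = τ x + τ y)
    (hsc : ∀ (b : Fp) (x : Fq), τ (algebraMap Fp Fq b * x) = algebraMap Fp Fq b * τ x) :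
    ∃ (r : Equiv.Perm (Fin n₀)) (c : Fin n₀ → Fp), (∀ m, c m ≠ 0) ∧
      ∀ (z : Fq) (m : Fin n₀), Algebra.trace Fp Fq (τ z * ξ ^ ((m : ℕ) + 1))
        = c m * Algebra.trace Fp Fq (z * ξ ^ (((r.symm m : Fin n₀) : ℕ) + 1)) := by
  classical
  have hinj : Function.Injective (algebraMap Fp Fq) := (algebraMap Fp Fq).injective
  -- τ as an Fp-linear map
  set T : Fq →ₗ[Fp] Fq :=
    { toFun := τ
      map_add' := hadd
      map_smul' := by
        intro b x
        simp only [RingHom.id_apply, Algebra.smul_def]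
        exact hsc b x } with hT
  -- for each m, representation of the functional z ↦ Tr (τ z * ξ^(m+1))
  have hrep : ∀ m : Fin n₀, ∃ b : Fq, b ≠ 0 ∧
      ∀ z, Algebra.trace Fp Fq (τ z * ξ ^ ((m : ℕ) + 1)) = Algebra.trace Fp Fq (z * b) := by
    intro m
    set g : Fq →ₗ[Fp] Fp :=
      ((Algebra.trace Fp Fq).comp (LinearMap.mulRight Fp (ξ ^ ((m : ℕ) + 1)))).comp T with hg
    obtain ⟨b, hb⟩ := tr_rep g
    have hgz : ∀ z, g z = Algebra.trace Fp Fq (τ z * ξ ^ ((m : ℕ) + 1)) := fun z => rfl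
    refine ⟨b, ?_, fun z => by rw [← hgz, hb]⟩
    intro hb0
    obtain ⟨z', hz'⟩ := tr_ex (Fp := Fp) (S.powne ((m : ℕ) + 1))
    obtain ⟨z, rfl⟩ := hbij.2 z'
    have := hb z
    rw [hb0, mul_zero, map_zero, hgz] at this
    exact hz' this
  choose b hbne hbrep using hrep
  choose cc ll hcc hdecomp using fun m => S.dec (b m) (hbne m)
  -- injectivity of m ↦ ll m
  have hllinj : Function.Injective ll := by
    intro m m' hmm
    by_contra hne
    have key : ∀ u : Fq, Algebra.trace Fp Fq
        (u * (algebraMap Fp Fq (cc m') * ξ ^ ((m : ℕ) + 1)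
          - algebraMap Fp Fq (cc m) * ξ ^ ((m' : ℕ) + 1))) = 0 := by
      intro u
      obtain ⟨z, rfl⟩ := hbij.2 u
      rw [mul_sub, map_sub]
      rw [show τ z * (algebraMap Fp Fq (cc m') * ξ ^ ((m : ℕ) + 1))
          = algebraMap Fp Fq (cc m') * (τ z * ξ ^ ((m : ℕ) + 1)) by ring]
      rw [show τ z * (algebraMap Fp Fq (cc m) * ξ ^ ((m' : ℕ) + 1))
          = algebraMap Fp Fq (cc m) * (τ z * ξ ^ ((m' : ℕ) + 1)) by ring]
      rw [tr_smul (cc m'), tr_smul (cc m), hbrep m z, hbrep m' z, hdecomp m, hdecomp m']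
      rw [show z * (algebraMap Fp Fq (cc m) * ξ ^ ((ll m : ℕ) + 1))
          = algebraMap Fp Fq (cc m) * (z * ξ ^ ((ll m : ℕ) + 1)) by ring]
      rw [show z * (algebraMap Fp Fq (cc m') * ξ ^ ((ll m' : ℕ) + 1))
          = algebraMap Fp Fq (cc m') * (z * ξ ^ ((ll m' : ℕ) + 1)) by ring]
      rw [tr_smul (cc m), tr_smul (cc m'), hmm]
      ring
    have h0 := tr_nd (Fp := Fp) key
    rw [sub_eq_zero] at h0
    exact hne (S.uniq (cc m') (cc m) m m' (hcc m') (hcc m) h0).2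
  have hllbij : Function.Bijective ll := Finite.injective_iff_bijective.mp hllinj
  set rinv : Equiv.Perm (Fin n₀) := Equiv.ofBijective ll hllbij with hrinv
  refine ⟨rinv.symm, cc, hcc, ?_⟩
  intro z m
  have hsymm : rinv.symm.symm m = ll m := rfl
  rw [hsymm, hbrep m z, hdecomp m]
  rw [show z * (algebraMap Fp Fq (cc m) * ξ ^ ((ll m : ℕ) + 1))
      = algebraMap Fp Fq (cc m) * (z * ξ ^ ((ll m : ℕ) + 1)) by ring]
  rw [tr_smul (cc m)]

end XiSetup

section PhiBasics

variable {Fp Fq : Type} [Field Fp] [Field Fq] [Fintype Fp] [Fintype Fq]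
  [DecidableEq Fp] [DecidableEq Fq] [Algebra Fp Fq]

-- placeholders for the already-proven parts (assumed as hypotheses here for speed of dev)
variable {n₀ : ℕ} {ξ : Fq} {n : ℕ}
  {Φ : (Fin n → Fq) → (Fin n × Fin n₀ → Fp)}

section A
variable
  (hsepx : ∀ {l l' : Fin n₀}, l ≠ l' → ∃ z, Algebra.trace Fp Fq (z * ξ ^ ((l' : ℕ) + 1)) = 0 ∧
      Algebra.trace Fp Fq (z * ξ ^ ((l : ℕ) + 1)) ≠ 0)
  (hexx : ∀ m : Fin n₀, ∃ z, Algebra.trace Fp Fq (z * ξ ^ ((m : ℕ) + 1)) ≠ 0)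
  (hinj0 : ∀ {z : Fq}, (∀ l : Fin n₀, Algebra.trace Fp Fq (z * ξ ^ ((l : ℕ) + 1)) = 0) → z = 0)
  (hΦ : ∀ (v : Fin n → Fq) (jl : Fin n × Fin n₀),
      Φ v jl = Algebra.trace Fp Fq (v jl.1 * ξ ^ ((jl.2 : ℕ) + 1)))

include hsepx hexx hinj0 hΦ

lemma phi_inj : Function.Injective Φ := by
  intro w w' h
  funext j
  have key : ∀ l : Fin n₀, Algebra.trace Fp Fq ((w j - w' j) * ξ ^ ((l : ℕ) + 1)) = 0 := by
    intro l
    have := congrFun h (j, l)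
    rw [hΦ, hΦ] at this
    simp only [sub_mul, map_sub]
    simpa [sub_eq_zero] using this
  exact sub_eq_zero.mp (hinj0 key)

lemma phi_sep2 {i i' : Fin n × Fin n₀} (h : i ≠ i') :
    ∃ w : Fin n → Fq, Φ w i ≠ 0 ∧ Φ w i' = 0 := by
  classical
  obtain ⟨j, m⟩ := i
  obtain ⟨j', m'⟩ := i'
  by_cases hjj : j = j'
  · subst hjj
    have hmm : m ≠ m' := fun hc => h (by rw [hc])
    obtain ⟨z, hz0, hzne⟩ := hsepx hmm
    refine ⟨fun j₀ => if j₀ = j then z else 0, ?_, ?_⟩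
    · rw [hΦ]; simpa using hzne
    · rw [hΦ]; simpa using hz0
  · obtain ⟨z, hzne⟩ := hexx m
    refine ⟨fun j₀ => if j₀ = j then z else 0, ?_, ?_⟩
    · rw [hΦ]; simpa using hzne
    · rw [hΦ]
      simp [Ne.symm hjj]

lemma phi_nz (i : Fin n × Fin n₀) : ∃ w : Fin n → Fq, Φ w i ≠ 0 := by
  classical
  obtain ⟨j, m⟩ := i
  obtain ⟨z, hzne⟩ := hexx m
  exact ⟨fun j₀ => if j₀ = j then z else 0, by rw [hΦ]; simpa using hzne⟩

end A
end PhiBasics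

section Main

variable {Fp Fq : Type} [Field Fp] [Field Fq] [Fintype Fp] [Fintype Fq]
  [DecidableEq Fp] [DecidableEq Fq] [Algebra Fp Fq]
  {n₀ : ℕ} {ξ : Fq} {n : ℕ}
  {Φ : (Fin n → Fq) → (Fin n × Fin n₀ → Fp)}
  (S : XiSetup (Fp := Fp) n₀ ξ)
  (hΦ : ∀ (v : Fin n → Fq) (jl : Fin n × Fin n₀),
      Φ v jl = Algebra.trace Fp Fq (v jl.1 * ξ ^ ((jl.2 : ℕ) + 1)))
  {C : Submodule Fq (Fin n → Fq)}
  (hdist : ∀ w ∈ dualSet (C : Set (Fin n → Fq)), w ≠ 0 → 4 ≤ hammingNorm w)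

include hdist in
lemma proj_surj (j : Fin n) (z : Fq) : ∃ w, w ∈ C ∧ w j = z := by
  classical
  by_cases hex : ∃ w₀ ∈ C, w₀ j ≠ 0
  · obtain ⟨w₀, hw₀, hw₀j⟩ := hex
    refine ⟨(z * (w₀ j)⁻¹) • w₀, C.smul_mem _ hw₀, ?_⟩
    simp only [Pi.smul_apply, smul_eq_mul]
    field_simp
  · push_neg at hex
    exfalso
    have hδ : (Pi.single j (1:Fq) : Fin n → Fq) ∈ dualSet (C : Set (Fin n → Fq)) := by
      intro w hw
      rw [Finset.sum_eq_single j]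
      · rw [Pi.single_eq_same, mul_one]; exact hex w hw
      · intro b _ hb; rw [Pi.single_eq_of_ne hb, mul_zero]
      · intro h; exact absurd (Finset.mem_univ j) h
    have hne : (Pi.single j (1:Fq) : Fin n → Fq) ≠ 0 := by
      intro h
      have := congrFun h j
      rw [Pi.single_eq_same] at this
      exact one_ne_zero this
    have h4 := hdist _ hδ hne
    have : hammingNorm (Pi.single j (1:Fq) : Fin n → Fq) = 1 := by
      unfold hammingNorm
      rw [show (Finset.univ.filter fun i => (Pi.single j (1:Fq) : Fin n → Fq) i ≠ 0) = {j} from ?_]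
      · simp
      · ext i
        simp only [Finset.mem_filter, Finset.mem_univ, true_and, Finset.mem_singleton]
        constructor
        · intro h
          by_contra hne
          exact h (Pi.single_eq_of_ne hne 1)
        · rintro rfl
          rw [Pi.single_eq_same]
          exact one_ne_zero
    omega

include hΦ in
lemma key_tr (w : Fin n → Fq) (y : Fin n × Fin n₀ → Fp) :
    Algebra.trace Fp Fq (∑ j, w j * (∑ m, algebraMap Fp Fq (y (j, m)) * ξ ^ ((m : ℕ) + 1)))
      = ∑ i : Fin n × Fin n₀, Φ w i * y i := by
  rw [map_sum, Fintype.sum_prod_type]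
  refine Finset.sum_congr rfl fun j _ => ?_
  rw [Finset.mul_sum, map_sum]
  refine Finset.sum_congr rfl fun m _ => ?_
  rw [show w j * (algebraMap Fp Fq (y (j, m)) * ξ ^ ((m : ℕ) + 1))
      = algebraMap Fp Fq (y (j, m)) * (w j * ξ ^ ((m : ℕ) + 1)) by ring]
  rw [tr_smul, hΦ, mul_comm]

include hΦ in
lemma bword (j : Fin n) (y₀ : Fin n₀ → Fp)
    (hy₀ : ∑ m, algebraMap Fp Fq (y₀ m) * ξ ^ ((m : ℕ) + 1) = 0) :
    (fun i : Fin n × Fin n₀ => if i.1 = j then y₀ i.2 else 0)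
      ∈ dualSet (Φ '' (C : Set (Fin n → Fq))) := by
  classical
  rintro _ ⟨w, hw, rfl⟩
  have := key_tr hΦ w (fun i => if i.1 = j then y₀ i.2 else 0)
  rw [← this]
  have hz : (∑ j', w j' * (∑ m, algebraMap Fp Fq
      (if (j', m).1 = j then y₀ (j', m).2 else 0) * ξ ^ ((m : ℕ) + 1))) = 0 := by
    rw [Finset.sum_eq_single j]
    · have heq : (∑ m, algebraMap Fp Fq (if ((j, m) : Fin n × Fin n₀).1 = j
          then y₀ (j, m).2 else 0) * ξ ^ ((m : ℕ) + 1))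
          = ∑ m, algebraMap Fp Fq (y₀ m) * ξ ^ ((m : ℕ) + 1) :=
        Finset.sum_congr rfl fun m _ => by simp
      rw [heq, hy₀, mul_zero]
    · intro b _ hb
      simp only [if_neg hb, map_zero, zero_mul, Finset.sum_const_zero, mul_zero]
    · intro h; exact absurd (Finset.mem_univ j) h
  rw [hz, map_zero]

include hΦ in
lemma beta_mem {y : Fin n × Fin n₀ → Fp} (hy : y ∈ dualSet (Φ '' (C : Set (Fin n → Fq)))) :
    (fun j => ∑ m, algebraMap Fp Fq (y (j, m)) * ξ ^ ((m : ℕ) + 1))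
      ∈ dualSet (C : Set (Fin n → Fq)) := by
  intro w hw
  apply tr_nd (Fp := Fp)
  intro α
  rw [Finset.mul_sum]
  have : ∀ j, α * (w j * (∑ m, algebraMap Fp Fq (y (j, m)) * ξ ^ ((m : ℕ) + 1)))
      = (α • w) j * (∑ m, algebraMap Fp Fq (y (j, m)) * ξ ^ ((m : ℕ) + 1)) := by
    intro j; simp [smul_eq_mul]; ring
  rw [Finset.sum_congr rfl fun j _ => this j, key_tr hΦ]
  exact hy _ ⟨α • w, C.smul_mem α hw, rfl⟩

include S hΦ hdist in
lemma beta_low {y : Fin n × Fin n₀ → Fp} (hy : y ∈ dualSet (Φ '' (C : Set (Fin n → Fq))))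
    (hlow : hammingNorm y ≤ 3) (j : Fin n) :
    ∑ m, algebraMap Fp Fq (y (j, m)) * ξ ^ ((m : ℕ) + 1) = 0 := by
  classical
  set β : Fin n → Fq := fun j => ∑ m, algebraMap Fp Fq (y (j, m)) * ξ ^ ((m : ℕ) + 1) with hβ
  have hβmem := beta_mem hΦ hy
  by_cases hβ0 : β = 0
  · exact congrFun hβ0 j
  · exfalso
    have h4 := hdist β hβmem hβ0
    have hle : hammingNorm β ≤ hammingNorm y := by
      unfold hammingNorm
      have hch : ∀ j' ∈ Finset.univ.filter (fun j' => β j' ≠ 0),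
          ∃ m, y (j', m) ≠ 0 := by
        intro j' hj'
        simp only [Finset.mem_filter] at hj'
        by_contra hc
        push_neg at hc
        apply hj'.2
        rw [hβ]
        simp only [hc, map_zero, zero_mul, Finset.sum_const_zero]
      apply Finset.card_le_card_of_injOn
        (fun j' => (j', if h : ∃ m, y (j', m) ≠ 0 then h.choose else ⟨0, S.pos⟩))
      · intro j' hj'
        obtain ⟨m, hm⟩ := hch j' hj'
        have hex : ∃ m, y (j', m) ≠ 0 := ⟨m, hm⟩
        simp only [dif_pos hex, Finset.mem_coe, Finset.mem_filter, Finset.mem_univ, true_and]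
        exact hex.choose_spec
      · intro a _ b _ hab
        exact congrArg Prod.fst hab
    omega

end Main

/-- Assemble a permutation of `ι → F` from a coordinate permutation and a family of
permutations of `F`. -/
def permAssemble {ι F : Type*} (π : Equiv.Perm ι) (σ : ι → Equiv.Perm F) :
    Equiv.Perm (ι → F) where
  toFun w i := σ i (w (π.symm i))
  invFun w j := (σ (π j)).symm (w (π j))
  left_inv w := funext fun j => by simp
  right_inv w := funext fun i => by simp

lemma permAssemble_apply {ι F : Type*} (π : Equiv.Perm ι) (σ : ι → Equiv.Perm F)
    (w : ι → F) (i : ι) : permAssemble π σ w i = σ i (w (π⁻¹ i)) := rfl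

/-- A permutation of a product built from a permutation of the first component and a
family of permutations of the second. -/
def prodPerm {A B : Type*} (π : Equiv.Perm A) (r : A → Equiv.Perm B) : Equiv.Perm (A × B) where
  toFun x := (π x.1, (r (π x.1)) x.2)
  invFun x := (π.symm x.1, (r x.1).symm x.2)
  left_inv := by rintro ⟨a, b⟩; simp
  right_inv := by rintro ⟨a, b⟩; simp

lemma prodPerm_inv_apply {A B : Type*} (π : Equiv.Perm A) (r : A → Equiv.Perm B) (a : A) (b : B) :
    (prodPerm π r)⁻¹ (a, b) = (π⁻¹ a, (r a)⁻¹ b) := rfl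

section Main2

variable {Fp Fq : Type} [Field Fp] [Field Fq] [Fintype Fp] [Fintype Fq]
  [DecidableEq Fp] [DecidableEq Fq] [Algebra Fp Fq]
  {n₀ : ℕ} {ξ : Fq} {n : ℕ}
  {Φ : (Fin n → Fq) → (Fin n × Fin n₀ → Fp)}
  (S : XiSetup (Fp := Fp) n₀ ξ)
  (hΦ : ∀ (v : Fin n → Fq) (jl : Fin n × Fin n₀),
      Φ v jl = Algebra.trace Fp Fq (v jl.1 * ξ ^ ((jl.2 : ℕ) + 1)))

include S hΦ

lemma phi_injective : Function.Injective Φ :=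
  phi_inj (fun {l l'} h => S.sep h) (fun m => tr_ex (Fp := Fp) (S.powne _))
    (fun {z} h => S.inj0 h) hΦ

lemma mono_unique {M M' : Equiv.Perm (Fin n × Fin n₀ → Fp)} (hM : IsMono M) (hM' : IsMono M')
    (h : ∀ w, M (Φ w) = M' (Φ w)) : M = M' := by
  obtain ⟨π, c, hc, hMe⟩ := hM
  obtain ⟨π', c', hc', hMe'⟩ := hM'
  have key : ∀ i : Fin n × Fin n₀, π⁻¹ i = π'⁻¹ i ∧ c i = c' i := by
    intro i
    have hp : π⁻¹ i = π'⁻¹ i := by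
      by_contra hne
      obtain ⟨w, hw1, hw2⟩ := phi_sep2 (fun {l l'} h => S.sep h)
        (fun m => tr_ex (Fp := Fp) (S.powne _)) (fun {z} h => S.inj0 h) hΦ hne
      have := congrFun (h w) i
      rw [hMe, hMe', hw2, mul_zero] at this
      exact hw1 (by
        rcases mul_eq_zero.mp this with h0 | h0
        · exact absurd h0 (hc i)
        · exact h0)
    refine ⟨hp, ?_⟩
    obtain ⟨w, hw1⟩ := phi_nz (fun {l l'} h => S.sep h)
      (fun m => tr_ex (Fp := Fp) (S.powne _)) (fun {z} h => S.inj0 h) hΦ (π⁻¹ i)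
    have := congrFun (h w) i
    rw [hMe, hMe', ← hp] at this
    exact mul_right_cancel₀ hw1 this
  apply Equiv.ext
  intro v
  funext i
  rw [hMe, hMe', (key i).1, (key i).2]

lemma fwd_exists {e : Equiv.Perm (Fin n → Fq)} (π : Equiv.Perm (Fin n))
    (σ : Fin n → Equiv.Perm Fq)
    (hadd : ∀ i x y, σ i (x + y) = σ i x + σ i y)
    (hsc : ∀ i (b : Fp) (x : Fq), σ i (algebraMap Fp Fq b * x) = algebraMap Fp Fq b * σ i x)
    (he : ∀ v i, e v i = σ i (v (π⁻¹ i))) :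
    ∃ M : Equiv.Perm (Fin n × Fin n₀ → Fp), IsMono M ∧ ∀ w, M (Φ w) = Φ (e w) := by
  choose r c hc hf using fun j => S.mono_of_linear (σ j) (σ j).bijective (hadd j) (hsc j)
  refine ⟨monoEquiv (prodPerm π r) (fun i => c i.1 i.2) (fun i => hc i.1 i.2),
    monoEquiv_isMono _ _ _, ?_⟩
  intro w
  funext i
  obtain ⟨j', m'⟩ := i
  rw [monoEquiv_apply, prodPerm_inv_apply, hΦ, hΦ, he]
  have := hf j' (w (π⁻¹ j')) m'
  rw [this]
  rfl

end Main2

section Main3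

variable {Fp Fq : Type} [Field Fp] [Field Fq] [Fintype Fp] [Fintype Fq]
  [DecidableEq Fp] [DecidableEq Fq] [Algebra Fp Fq]
  {n₀ : ℕ} {ξ : Fq} {n : ℕ}
  {Φ : (Fin n → Fq) → (Fin n × Fin n₀ → Fp)}
  (S : XiSetup (Fp := Fp) n₀ ξ)
  (hΦ : ∀ (v : Fin n → Fq) (jl : Fin n × Fin n₀),
      Φ v jl = Algebra.trace Fp Fq (v jl.1 * ξ ^ ((jl.2 : ℕ) + 1)))
  {C : Submodule Fq (Fin n → Fq)}
  (hdist : ∀ w ∈ dualSet (C : Set (Fin n → Fq)), w ≠ 0 → 4 ≤ hammingNorm w)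

include S hΦ hdist in
lemma same_block {M : Equiv.Perm (Fin n × Fin n₀ → Fp)}
    (Pe : Equiv.Perm (Fin n × Fin n₀)) (c : Fin n × Fin n₀ → Fp) (hc : ∀ i, c i ≠ 0)
    (hMe : ∀ v i, M v i = c i * v (Pe⁻¹ i))
    (hMV : ⇑M '' (Φ '' (C : Set (Fin n → Fq))) = Φ '' (C : Set (Fin n → Fq)))
    (j : Fin n) (m m' : Fin n₀) : (Pe (j, m)).1 = (Pe (j, m')).1 := by
  classical
  rcases eq_or_ne m m' with rfl | hmm
  · rfl
  set N := monoEquiv Pe (fun i => (c i)⁻¹) (fun i => inv_ne_zero (hc i)) with hN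
  have hDp : Dpart M N := dpart_explicit Pe c hc hMe
  have hND := dpart_memD hDp hMV
  obtain ⟨y₀, l'', hy₀m, hy₀m', hl''m, hl''m', hsupp, hrel⟩ := S.ham3 hmm
  set yhat : Fin n × Fin n₀ → Fp := fun i => if i.1 = j then y₀ i.2 else 0 with hyhat
  have hyhatD : yhat ∈ dualSet (Φ '' (C : Set (Fin n → Fq))) := bword hΦ j y₀ hrel
  have hNy : N yhat ∈ dualSet (Φ '' (C : Set (Fin n → Fq))) := by
    rw [← hND]; exact Set.mem_image_of_mem _ hyhatD
  have hNapp : ∀ i, N yhat i = (c i)⁻¹ * yhat (Pe⁻¹ i) := fun i => rfl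
  have hNsupp : ∀ i, N yhat i ≠ 0 →
      Pe⁻¹ i = (j, m) ∨ Pe⁻¹ i = (j, m') ∨ Pe⁻¹ i = (j, l'') := by
    intro i hi
    rw [hNapp] at hi
    have h2 : yhat (Pe⁻¹ i) ≠ 0 := fun h0 => hi (by rw [h0, mul_zero])
    rw [hyhat] at h2
    by_cases ha : (Pe⁻¹ i).1 = j
    · simp only [if_pos ha] at h2
      rcases hsupp _ h2 with h | h | h
      · left; exact Prod.ext ha h
      · right; left; exact Prod.ext ha h
      · right; right; exact Prod.ext ha h
    · simp only [if_neg ha] at h2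
      exact absurd rfl h2
  have hNlow : hammingNorm (N yhat) ≤ 3 := by
    unfold hammingNorm
    have hss : Finset.univ.filter (fun i => N yhat i ≠ 0)
        ⊆ {Pe (j, m), Pe (j, m'), Pe (j, l'')} := by
      intro i hi
      simp only [Finset.mem_filter, Finset.mem_univ, true_and] at hi
      simp only [Finset.mem_insert, Finset.mem_singleton]
      rcases hNsupp i hi with h | h | h
      · left; rw [← h, Equiv.Perm.apply_inv_self]
      · right; left; rw [← h, Equiv.Perm.apply_inv_self]
      · right; right; rw [← h, Equiv.Perm.apply_inv_self]
    refine (Finset.card_le_card hss).trans ?_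
    refine (Finset.card_insert_le _ _).trans ?_
    have := (Finset.card_insert_le (Pe (j, m')) ({Pe (j, l'')} : Finset (Fin n × Fin n₀)))
    simp only [Finset.card_singleton] at this
    omega
  have hrelN := beta_low S hΦ hdist hNy hNlow
  by_contra hdiff
  set j₁ := (Pe (j, m)).1 with hj₁
  set m₁ := (Pe (j, m)).2 with hm₁
  have hm₁ne : N yhat (j₁, m₁) ≠ 0 := by
    have heta : ((j₁, m₁) : Fin n × Fin n₀) = Pe (j, m) := rfl
    rw [heta, hNapp, Equiv.Perm.inv_apply_self]
    have : yhat (j, m) = y₀ m := by rw [hyhat]; simp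
    rw [this]
    exact mul_ne_zero (inv_ne_zero (hc _)) hy₀m
  set m₂ := (Pe (j, l'')).2 with hm₂
  have hsupp1 : ∀ mm, N yhat (j₁, mm) ≠ 0 → mm = m₁ ∨ mm = m₂ := by
    intro mm hmm2
    rcases hNsupp _ hmm2 with h | h | h
    · left
      have : ((j₁, mm) : Fin n × Fin n₀) = Pe (j, m) := by
        rw [← h, Equiv.Perm.apply_inv_self]
      exact congrArg Prod.snd this
    · exfalso
      have : ((j₁, mm) : Fin n × Fin n₀) = Pe (j, m') := by
        rw [← h, Equiv.Perm.apply_inv_self]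
      exact hdiff (by simpa [hj₁] using congrArg Prod.fst this)
    · right
      have : ((j₁, mm) : Fin n × Fin n₀) = Pe (j, l'') := by
        rw [← h, Equiv.Perm.apply_inv_self]
      exact congrArg Prod.snd this
  have hnontriv : Nontrivial (Fin n₀) := ⟨⟨m, m', hmm⟩⟩
  by_cases hcase : (Pe (j, l'')).1 = j₁
  · -- m₂ is a genuine second coordinate; m₁ ≠ m₂
    have hm12 : m₁ ≠ m₂ := by
      intro hEq
      have : Pe (j, m) = Pe (j, l'') := Prod.ext (by rw [← hj₁, hcase]) (by rw [← hm₁, hEq, hm₂])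
      have := Pe.injective this
      exact hl''m (congrArg Prod.snd this).symm
    have := S.rel2 hm12 (fun mm => N yhat (j₁, mm)) hsupp1 (hrelN j₁)
    exact hm₁ne this
  · -- support is only {m₁}: pick any m₂' ≠ m₁
    obtain ⟨m₂', hm₂'⟩ := exists_ne (α := Fin n₀) m₁
    have hsupp1' : ∀ mm, N yhat (j₁, mm) ≠ 0 → mm = m₁ ∨ mm = m₂' := by
      intro mm hmm2
      rcases hNsupp _ hmm2 with h | h | h
      · left
        have : ((j₁, mm) : Fin n × Fin n₀) = Pe (j, m) := by
          rw [← h, Equiv.Perm.apply_inv_self]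
        exact congrArg Prod.snd this
      · exfalso
        have : ((j₁, mm) : Fin n × Fin n₀) = Pe (j, m') := by
          rw [← h, Equiv.Perm.apply_inv_self]
        exact hdiff (by simpa [hj₁] using congrArg Prod.fst this)
      · exfalso
        have : ((j₁, mm) : Fin n × Fin n₀) = Pe (j, l'') := by
          rw [← h, Equiv.Perm.apply_inv_self]
        exact hcase (congrArg Prod.fst this).symm
    have := S.rel2 (Ne.symm hm₂') (fun mm => N yhat (j₁, mm)) hsupp1' (hrelN j₁)
    exact hm₁ne this

include S hΦ hdist in
set_option maxHeartbeats 2000000 in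
lemma bwd_exists {M : Equiv.Perm (Fin n × Fin n₀ → Fp)} (hM : IsMono M)
    (hMV : ⇑M '' (Φ '' (C : Set (Fin n → Fq))) = Φ '' (C : Set (Fin n → Fq))) :
    ∃ e : Equiv.Perm (Fin n → Fq), e ∈ autLSet Fp (C : Set (Fin n → Fq)) ∧
      ∀ w, M (Φ w) = Φ (e w) := by
  classical
  obtain ⟨Pe, c, hc, hMe⟩ := hM
  have hsame := same_block S hΦ hdist Pe c hc hMe hMV
  -- the block permutation
  set π₀ : Fin n → Fin n := fun j => (Pe (j, ⟨0, S.pos⟩)).1 with hπ₀def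
  have hπ₀ : ∀ j mm, (Pe (j, mm)).1 = π₀ j := fun j mm => hsame j mm ⟨0, S.pos⟩
  have hπ₀inj : Function.Injective π₀ := by
    intro a b hab
    by_contra hne
    set f : Fin n₀ ⊕ Fin n₀ → Fin n₀ :=
      Sum.elim (fun mm => (Pe (a, mm)).2) (fun mm => (Pe (b, mm)).2) with hfdef
    have hfinj : Function.Injective f := by
      rintro (x | x) (y | y) hxy <;> simp only [hfdef, Sum.elim_inl, Sum.elim_inr] at hxy
      · have h1 : Pe (a, x) = Pe (a, y) :=
          Prod.ext (by rw [hπ₀ a x, hπ₀ a y]) hxy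
        exact congrArg Sum.inl (show x = y from (Prod.ext_iff.mp (Pe.injective h1)).2)
      · exfalso
        have h1 : Pe (a, x) = Pe (b, y) :=
          Prod.ext (by rw [hπ₀ a x, hπ₀ b y, hab]) hxy
        exact hne (show a = b from (Prod.ext_iff.mp (Pe.injective h1)).1)
      · exfalso
        have h1 : Pe (b, x) = Pe (a, y) :=
          Prod.ext (by rw [hπ₀ b x, hπ₀ a y, hab]) hxy
        exact hne (show b = a from (Prod.ext_iff.mp (Pe.injective h1)).1).symm
      · have h1 : Pe (b, x) = Pe (b, y) :=
          Prod.ext (by rw [hπ₀ b x, hπ₀ b y]) hxy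
        exact congrArg Sum.inr (show x = y from (Prod.ext_iff.mp (Pe.injective h1)).2)
    have hcard := Fintype.card_le_of_injective f hfinj
    simp only [Fintype.card_sum, Fintype.card_fin] at hcard
    have := S.pos
    omega
  set πe : Equiv.Perm (Fin n) :=
    Equiv.ofBijective π₀ (Finite.injective_iff_bijective.mp hπ₀inj) with hπe
  have hπe_app : ∀ j, πe j = π₀ j := fun j => rfl
  have hPinv1 : ∀ i : Fin n × Fin n₀, (Pe⁻¹ i).1 = πe⁻¹ i.1 := by
    intro i
    have h1 : Pe ((Pe⁻¹ i).1, (Pe⁻¹ i).2) = i := by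
      rw [show ((Pe⁻¹ i).1, (Pe⁻¹ i).2) = Pe⁻¹ i from rfl, Equiv.Perm.apply_inv_self]
    have h2 : i.1 = πe ((Pe⁻¹ i).1) := by
      rw [hπe_app, ← hπ₀ (Pe⁻¹ i).1 (Pe⁻¹ i).2, h1]
    rw [h2, Equiv.Perm.inv_apply_self]
  -- inverse coverage of second coordinates
  have hbb : ∀ (j' : Fin n) (bb : Fin n₀), ∃ m', (Pe⁻¹ (j', m')).2 = bb := by
    intro j' bb
    refine ⟨(Pe ((πe⁻¹ j' : Fin n), bb)).2, ?_⟩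
    have h1 : Pe ((πe⁻¹ j' : Fin n), bb) = (j', (Pe ((πe⁻¹ j' : Fin n), bb)).2) := by
      refine Prod.ext ?_ rfl
      rw [hπ₀, ← hπe_app, Equiv.Perm.apply_inv_self]
    have h2 : Pe⁻¹ (j', (Pe ((πe⁻¹ j' : Fin n), bb)).2) = ((πe⁻¹ j' : Fin n), bb) := by
      rw [← h1, Equiv.Perm.inv_apply_self]
    rw [h2]
  -- hM2 : images of codewords
  have hM2 : ∀ w ∈ C, ∃ u, u ∈ C ∧ M (Φ w) = Φ u := by
    intro w hw
    have h1 : M (Φ w) ∈ ⇑M '' (Φ '' (C : Set (Fin n → Fq))) :=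
      Set.mem_image_of_mem _ (Set.mem_image_of_mem _ hw)
    rw [hMV] at h1
    obtain ⟨u, hu, heq⟩ := h1
    exact ⟨u, hu, heq.symm⟩
  choose wz hwzC hwz using fun (j' : Fin n) (z : Fq) => proj_surj hdist (πe⁻¹ j') z
  choose uu huuC huu using fun (j' : Fin n) (z : Fq) => hM2 (wz j' z) (hwzC j' z)
  set σf : Fin n → Fq → Fq := fun j' z => uu j' z j' with hσf
  have hkey : ∀ (j' : Fin n) (z : Fq) (m' : Fin n₀),
      Algebra.trace Fp Fq (σf j' z * ξ ^ ((m' : ℕ) + 1))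
        = c (j', m') * Algebra.trace Fp Fq (z * ξ ^ (((Pe⁻¹ (j', m')).2 : ℕ) + 1)) := by
    intro j' z m'
    have h1 : Φ (uu j' z) (j', m') = M (Φ (wz j' z)) (j', m') := by rw [huu]
    rw [hΦ, hMe, hΦ] at h1
    have h2 : wz j' z (Pe⁻¹ (j', m')).1 = z := by
      rw [hPinv1]
      exact hwz j' z
    rw [h2] at h1
    exact h1
  -- additivity
  have hσadd : ∀ j' x y, σf j' (x + y) = σf j' x + σf j' y := by
    intro j' x y
    have hz : ∀ m' : Fin n₀, Algebra.trace Fp Fq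
        ((σf j' (x + y) - σf j' x - σf j' y) * ξ ^ ((m' : ℕ) + 1)) = 0 := by
      intro m'
      rw [sub_mul, sub_mul, map_sub, map_sub, hkey, hkey, hkey, add_mul, map_add]
      ring
    have := S.inj0 hz
    linear_combination this
  have hσsc : ∀ j' (b : Fp) x, σf j' (algebraMap Fp Fq b * x)
      = algebraMap Fp Fq b * σf j' x := by
    intro j' b x
    have hz : ∀ m' : Fin n₀, Algebra.trace Fp Fq
        ((σf j' (algebraMap Fp Fq b * x) - algebraMap Fp Fq b * σf j' x)
          * ξ ^ ((m' : ℕ) + 1)) = 0 := by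
      intro m'
      rw [sub_mul, map_sub, hkey, trmul, trmul, hkey]
      ring
    have := S.inj0 hz
    linear_combination this
  have hσinj : ∀ j', Function.Injective (σf j') := by
    intro j' x y hxy
    have hz : ∀ bb : Fin n₀, Algebra.trace Fp Fq ((x - y) * ξ ^ ((bb : ℕ) + 1)) = 0 := by
      intro bb
      obtain ⟨m', hm'⟩ := hbb j' bb
      have h1 : Algebra.trace Fp Fq (σf j' x * ξ ^ ((m' : ℕ) + 1))
          = Algebra.trace Fp Fq (σf j' y * ξ ^ ((m' : ℕ) + 1)) := by rw [hxy]
      rw [hkey, hkey] at h1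
      have h2 := mul_left_cancel₀ (hc (j', m')) h1
      rw [hm'] at h2
      rw [sub_mul, map_sub, h2, sub_self]
    have := S.inj0 hz
    linear_combination this
  have hσbij : ∀ j', Function.Bijective (σf j') :=
    fun j' => Finite.injective_iff_bijective.mp (hσinj j')
  set σE : Fin n → Equiv.Perm Fq := fun j' => Equiv.ofBijective _ (hσbij j') with hσE
  have hσE_app : ∀ j' z, σE j' z = σf j' z := fun j' z => rfl
  set e : Equiv.Perm (Fin n → Fq) := permAssemble πe σE with he
  have he_app : ∀ w i, e w i = σE i (w (πe⁻¹ i)) := fun w i => rfl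
  have hfinal : ∀ w, M (Φ w) = Φ (e w) := by
    intro w
    funext i
    obtain ⟨j', m'⟩ := i
    rw [hMe, hΦ, hΦ, he_app, hσE_app, hkey, hPinv1 (j', m')]
  refine ⟨e, ⟨⟨πe, σE, ?_, ?_, fun v i => rfl⟩, ?_⟩, hfinal⟩
  · intro i x y
    rw [hσE_app, hσE_app, hσE_app]
    exact hσadd i x y
  · intro i b x
    rw [hσE_app, hσE_app]
    exact hσsc i b x
  · -- e '' C = C
    have himg : Φ '' (⇑e '' (C : Set (Fin n → Fq))) = Φ '' (C : Set (Fin n → Fq)) := by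
      rw [Set.image_image]
      have : (fun w => Φ (e w)) '' (C : Set (Fin n → Fq))
          = (fun w => M (Φ w)) '' (C : Set (Fin n → Fq)) := by
        refine Set.image_congr fun w _ => ?_
        rw [hfinal]
      rw [this, ← Set.image_image (g := ⇑M) (f := Φ), hMV]
    exact Set.image_injective.mpr (phi_injective S hΦ) himg

include S hΦ hdist in
set_option maxHeartbeats 2000000 in
lemma mulBijOn_L_M :
    MulBijOn (autLSet Fp (C : Set (Fin n → Fq)))
      (autMSet (Φ '' (C : Set (Fin n → Fq)))) := by
  classical
  set P : Equiv.Perm (Fin n → Fq) → Equiv.Perm (Fin n × Fin n₀ → Fp) → Prop :=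
    fun e M => IsMono M ∧ ∀ w, M (Φ w) = Φ (e w) with hP
  set f : Equiv.Perm (Fin n → Fq) → Equiv.Perm (Fin n × Fin n₀ → Fp) :=
    fun e => if h : ∃ M, P e M then h.choose else 1 with hf
  have hfspec : ∀ e, (∃ M, P e M) → P e (f e) := by
    intro e h
    rw [hf]
    simp only [dif_pos h]
    exact h.choose_spec
  have hfeq : ∀ e M, P e M → f e = M := by
    intro e M hM
    have hex : ∃ M', P e M' := ⟨M, hM⟩
    have h1 := hfspec e hex
    exact mono_unique S hΦ h1.1 hM.1 (fun w => by rw [h1.2, hM.2])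
  have hexL : ∀ e ∈ autLSet Fp (C : Set (Fin n → Fq)), ∃ M, P e M := by
    rintro e ⟨⟨π, σ, hadd, hsc, hee⟩, heC⟩
    obtain ⟨M, h1, h2⟩ := fwd_exists S hΦ π σ hadd hsc hee
    exact ⟨M, h1, h2⟩
  have himg : ∀ (e : Equiv.Perm (Fin n → Fq)) (M : Equiv.Perm (Fin n × Fin n₀ → Fp)),
      (∀ w, M (Φ w) = Φ (e w)) → ⇑e '' (C : Set (Fin n → Fq)) = (C : Set (Fin n → Fq)) →
      ⇑M '' (Φ '' (C : Set (Fin n → Fq))) = Φ '' (C : Set (Fin n → Fq)) := by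
    intro e M hMe heC
    calc ⇑M '' (Φ '' (C : Set (Fin n → Fq)))
        = (fun w => M (Φ w)) '' (C : Set (Fin n → Fq)) := Set.image_image _ _ _
      _ = (fun w => Φ (e w)) '' (C : Set (Fin n → Fq)) :=
          Set.image_congr fun w _ => hMe w
      _ = Φ '' (⇑e '' (C : Set (Fin n → Fq))) := (Set.image_image _ _ _).symm
      _ = Φ '' (C : Set (Fin n → Fq)) := by rw [heC]
  refine ⟨f, ⟨?_, ?_, ?_⟩, ?_⟩
  · -- MapsTo
    intro e he
    obtain ⟨M, hM⟩ := hexL e he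
    rw [hfeq e M hM]
    exact ⟨hM.1, himg e M hM.2 he.2⟩
  · -- InjOn
    intro e₁ h₁ e₂ h₂ heq
    obtain ⟨M₁, hM₁⟩ := hexL e₁ h₁
    obtain ⟨M₂, hM₂⟩ := hexL e₂ h₂
    rw [hfeq e₁ M₁ hM₁, hfeq e₂ M₂ hM₂] at heq
    subst heq
    apply Equiv.ext
    intro w
    apply phi_injective S hΦ
    rw [← hM₁.2, ← hM₂.2]
  · -- SurjOn
    rintro M ⟨hmono, hMV⟩
    obtain ⟨e, heL, hfor⟩ := bwd_exists S hΦ hdist hmono hMV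
    exact ⟨e, heL, hfeq e M ⟨hmono, hfor⟩⟩
  · -- multiplicative
    intro a ha b hb
    obtain ⟨Ma, hMa⟩ := hexL a ha
    obtain ⟨Mb, hMb⟩ := hexL b hb
    rw [hfeq a Ma hMa, hfeq b Mb hMb]
    refine hfeq (a * b) (Ma * Mb) ⟨isMono_mul hMa.1 hMb.1, fun w => ?_⟩
    have h1 : (Ma * Mb) (Φ w) = Ma (Mb (Φ w)) := rfl
    rw [h1, hMb.2, hMa.2]
    rfl

end Main3


/-- Let `C ⊆ F_q^n` be a linear code whose dual `C^⊥` has minimum Hamming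
weight at least `4`.  Then the three groups `AutL_p(C)`, `AutM(φ(C))` and `AutM(φ(C)^⊥)`
are pairwise isomorphic. -/
theorem stmt_6 (p k n₀ : ℕ) (hk : 1 ≤ k) (hcop : Nat.Coprime k (p - 1))
    (Fp Fq : Type) [Field Fp] [Field Fq] [Fintype Fp] [Fintype Fq]
    [DecidableEq Fp] [DecidableEq Fq] [Algebra Fp Fq]
    (hcp : Fintype.card Fp = p) (hcq : Fintype.card Fq = p ^ k)
    (hn₀ : n₀ = (p ^ k - 1) / (p - 1))
    (ξ : Fq) (hξ : orderOf ξ = n₀)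
    (n : ℕ) (hn : 1 ≤ n)
    (Φ : (Fin n → Fq) → (Fin n × Fin n₀ → Fp))
    (hΦ : ∀ (v : Fin n → Fq) (jl : Fin n × Fin n₀),
      Φ v jl = Algebra.trace Fp Fq (v jl.1 * ξ ^ ((jl.2 : ℕ) + 1)))
    (C : Submodule Fq (Fin n → Fq))
    (hdist : ∀ w ∈ dualSet (C : Set (Fin n → Fq)), w ≠ 0 → 4 ≤ hammingNorm w) :
    MulBijOn (autLSet Fp (C : Set (Fin n → Fq))) (autMSet (Φ '' (C : Set (Fin n → Fq)))) ∧
    MulBijOn (autMSet (Φ '' (C : Set (Fin n → Fq))))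
      (autMSet (dualSet (Φ '' (C : Set (Fin n → Fq))))) ∧
    MulBijOn (autLSet Fp (C : Set (Fin n → Fq)))
      (autMSet (dualSet (Φ '' (C : Set (Fin n → Fq))))) := by
  have S := xiSetup (Fp := Fp) (Fq := Fq) p k n₀ hk hcop hcp hcq hn₀ ξ hξ
  have h1 := mulBijOn_L_M S hΦ hdist
  -- Φ '' C is a subspace
  have hΦadd : ∀ v v' : Fin n → Fq, Φ (v + v') = Φ v + Φ v' := by
    intro v v'
    funext i
    rw [Pi.add_apply, hΦ, hΦ, hΦ, Pi.add_apply, add_mul, map_add]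
  have hΦsmul : ∀ (b : Fp) (v : Fin n → Fq), Φ (b • v) = b • Φ v := by
    intro b v
    funext i
    rw [Pi.smul_apply, hΦ, hΦ, Pi.smul_apply, Algebra.smul_def, smul_eq_mul, trmul]
  set Φl : (Fin n → Fq) →ₗ[Fp] (Fin n × Fin n₀ → Fp) :=
    { toFun := Φ
      map_add' := hΦadd
      map_smul' := hΦsmul } with hΦl
  set W : Submodule Fp (Fin n × Fin n₀ → Fp) :=
    Submodule.map Φl (C.restrictScalars Fp) with hW
  have hWcoe : (W : Set (Fin n × Fin n₀ → Fp)) = Φ '' (C : Set (Fin n → Fq)) := by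
    rw [hW, Submodule.map_coe]
    rfl
  have hdd := dualSet_dualSet W
  rw [hWcoe] at hdd
  have h2 := mulBijOn_autM_dual (Φ '' (C : Set (Fin n → Fq))) hdd
  exact ⟨h1, h2, h1.trans h2⟩
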